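/- arXiv:0909.1482 — 4 statements merged into one kernel-verified Lean document; each statement's English description precedes it below -/
import Mathlib

section
/- Let A be an integral domain and let D = diag(d_1,...,d_r,0,...,0) and D' = diag(d'_1,...,d'_s,0,...,0) be diagonal n×n matrices over A with d_k | d_{k+1} for k = 1,...,r-1 and d'_k | d'_{k+1} for k = 1,...,s-1. If D = P·D'·Q for invertible matrices P, Q over A, then r = s and (d_k) = (d'_k) as ideals for all k. -/
open Matrix Finset

lemma det_mul_rect {A : Type*} [CommRing A] {k n : ℕ}
    (P : Matrix (Fin k) (Fin n) A) (Q : Matrix (Fin n) (Fin k) A) :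
    (P * Q).det = ∑ f : Fin k → Fin n, (∏ i, P i (f i)) * (Q.submatrix f id).det := by
  have h : (P * Q) = Matrix.of fun i => ∑ l, P i l • Q l := by
    ext i j; simp [Matrix.mul_apply]
  rw [h]
  have hsum := MultilinearMap.map_sum
    (Matrix.detRowAlternating (R := A) (n := Fin k)).toMultilinearMap
    (g := fun (i : Fin k) (l : Fin n) => P i l • Q l)
  rw [AlternatingMap.coe_multilinearMap] at hsum
  show (Matrix.detRowAlternating fun i => ∑ l, P i l • Q l) = _
  rw [hsum]
  refine Finset.sum_congr rfl fun f _ => ?_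
  have hsmul := MultilinearMap.map_smul_univ
    (Matrix.detRowAlternating (R := A) (n := Fin k)).toMultilinearMap
    (fun i => P i (f i)) (fun i => Q (f i))
  rw [AlternatingMap.coe_multilinearMap] at hsmul
  rw [hsmul, smul_eq_mul]
  rfl

/-- The ideal generated by all `k × k` minors of a matrix. -/
def minorsIdeal {A : Type*} [CommRing A] {n : ℕ} (k : ℕ) (M : Matrix (Fin n) (Fin n) A) :
    Ideal A :=
  Ideal.span (Set.range fun p : (Fin k → Fin n) × (Fin k → Fin n) => (M.submatrix p.1 p.2).det)

lemma minor_mem_minorsIdeal {A : Type*} [CommRing A] {n : ℕ} (k : ℕ)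
    (M : Matrix (Fin n) (Fin n) A) (ρ σ : Fin k → Fin n) :
    (M.submatrix ρ σ).det ∈ minorsIdeal k M :=
  Ideal.subset_span ⟨(ρ, σ), rfl⟩

lemma minorsIdeal_mul_le_right {A : Type*} [CommRing A] {n : ℕ} (k : ℕ)
    (M N : Matrix (Fin n) (Fin n) A) :
    minorsIdeal k (M * N) ≤ minorsIdeal k N := by
  rw [minorsIdeal, Ideal.span_le]
  rintro _ ⟨⟨ρ, σ⟩, rfl⟩
  have h : (M * N).submatrix ρ σ = M.submatrix ρ id * N.submatrix id σ :=
    Matrix.submatrix_mul M N ρ id σ Function.bijective_id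
  simp only [h, det_mul_rect]
  refine Ideal.sum_mem _ fun f _ => Ideal.mul_mem_left _ _ ?_
  have : (N.submatrix id σ).submatrix f id = N.submatrix f σ := rfl
  rw [this]
  exact minor_mem_minorsIdeal k N f σ

lemma minorsIdeal_transpose {A : Type*} [CommRing A] {n : ℕ} (k : ℕ)
    (M : Matrix (Fin n) (Fin n) A) :
    minorsIdeal k Mᵀ = minorsIdeal k M := by
  have key : ∀ (X : Matrix (Fin n) (Fin n) A), minorsIdeal k Xᵀ ≤ minorsIdeal k X := by
    intro X
    rw [minorsIdeal, Ideal.span_le]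
    rintro _ ⟨⟨ρ, σ⟩, rfl⟩
    show (Xᵀ.submatrix ρ σ).det ∈ minorsIdeal k X
    rw [show (Xᵀ.submatrix ρ σ) = (X.submatrix σ ρ)ᵀ from rfl, Matrix.det_transpose]
    exact minor_mem_minorsIdeal k X σ ρ
  refine le_antisymm (key M) ?_
  have := key Mᵀ
  rwa [Matrix.transpose_transpose] at this

lemma minorsIdeal_mul_le_left {A : Type*} [CommRing A] {n : ℕ} (k : ℕ)
    (M N : Matrix (Fin n) (Fin n) A) :
    minorsIdeal k (M * N) ≤ minorsIdeal k M := by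
  rw [← minorsIdeal_transpose k (M * N), Matrix.transpose_mul,
    ← minorsIdeal_transpose k M]
  exact minorsIdeal_mul_le_right k Nᵀ Mᵀ

lemma fin_val_le_strictMono {k n : ℕ} {f : Fin k → Fin n} (hf : StrictMono f) (j : Fin k) :
    (j : ℕ) ≤ (f j : ℕ) := by
  obtain ⟨j, hj⟩ := j
  induction j with
  | zero => exact Nat.zero_le _
  | succ j ih =>
    have hj' : j < k := Nat.lt_of_succ_lt hj
    have h1 : (f ⟨j, hj'⟩ : ℕ) < (f ⟨j + 1, hj⟩ : ℕ) := hf (by simp [Fin.lt_def])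
    exact Nat.succ_le_of_lt (lt_of_le_of_lt (ih hj') h1)

lemma chain_dvd_of_dvd_succ {A : Type*} [CommRing A] (d : ℕ → A) (r : ℕ)
    (h : ∀ i, i + 1 < r → d i ∣ d (i + 1)) :
    ∀ a b, a ≤ b → b < r → d a ∣ d b := by
  intro a b hab hbr
  induction b with
  | zero => obtain rfl : a = 0 := Nat.le_zero.1 hab; exact dvd_rfl
  | succ b ih =>
    rcases eq_or_lt_of_le hab with rfl | hab'
    · exact dvd_rfl
    · exact (ih (Nat.lt_succ_iff.mp hab') (Nat.lt_of_succ_lt hbr)).trans (h b hbr)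

lemma prod_dvd_prod_comp_injective {A : Type*} [CommRing A] {n k r : ℕ} (d : ℕ → A)
    (hddvd : ∀ i, i + 1 < r → d i ∣ d (i + 1))
    (σ : Fin k → Fin n) (hσ : Function.Injective σ) :
    (∏ j ∈ Finset.range k, if j < r then d j else 0) ∣
      ∏ i : Fin k, (if ((σ i : ℕ)) < r then d (σ i) else 0) := by
  classical
  set v : Fin n → A := fun i => if (i : ℕ) < r then d i else 0 with hv
  set S : Finset (Fin n) := Finset.univ.image σ with hS
  have hcard : S.card = k := by
    rw [hS, Finset.card_image_of_injective _ hσ, Finset.card_univ, Fintype.card_fin]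
  set m : Fin k → Fin n := fun j => S.orderEmbOfFin hcard j with hm
  have hmono : StrictMono m := (S.orderEmbOfFin hcard).strictMono
  have h1 : ∏ i : Fin k, v (σ i) = ∏ x ∈ S, v x := by
    rw [hS]
    exact (Finset.prod_image (fun x _ y _ h => hσ h)).symm
  have h2 : ∏ x ∈ S, v x = ∏ j : Fin k, v (m j) := by
    refine (Finset.prod_bij (fun (j : Fin k) _ => m j) (fun j _ => ?_) ?_ ?_ (fun _ _ => rfl)).symm
    · exact S.orderEmbOfFin_mem hcard j
    · intro a _ b _ h
      exact (S.orderEmbOfFin hcard).injective h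
    · intro b hb
      have hb' : b ∈ Set.range (S.orderEmbOfFin hcard) := by
        rw [Finset.range_orderEmbOfFin]; exact hb
      obtain ⟨j, hj⟩ := hb'
      exact ⟨j, Finset.mem_univ j, hj⟩
  show (∏ j ∈ Finset.range k, if j < r then d j else 0) ∣ ∏ i : Fin k, v (σ i)
  rw [h1, h2, ← Fin.prod_univ_eq_prod_range (fun j => if j < r then d j else 0) ]
  refine Finset.prod_dvd_prod_of_dvd _ _ fun j _ => ?_
  have hjm : (j : ℕ) ≤ (m j : ℕ) := fin_val_le_strictMono hmono j
  by_cases hjr : (j : ℕ) < r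
  · rw [if_pos hjr, hv]
    by_cases hmr : ((m j : Fin n) : ℕ) < r
    · simpa [hmr] using chain_dvd_of_dvd_succ d r hddvd j (m j) hjm hmr
    · simp [hmr]
  · rw [if_neg hjr, hv]
    have : ¬ ((m j : Fin n) : ℕ) < r := fun h => hjr (lt_of_le_of_lt hjm h)
    simp [this]

lemma minorsIdeal_diagonal {A : Type*} [CommRing A] {n r k : ℕ} (hk : k ≤ n) (d : ℕ → A)
    (hddvd : ∀ i, i + 1 < r → d i ∣ d (i + 1)) :
    minorsIdeal k (Matrix.diagonal (fun i : Fin n => if (i : ℕ) < r then d i else 0)) =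
      Ideal.span {∏ j ∈ Finset.range k, if j < r then d j else 0} := by
  classical
  set v : Fin n → A := fun i => if (i : ℕ) < r then d i else 0 with hv
  set q : A := ∏ j ∈ Finset.range k, if j < r then d j else 0 with hq
  apply le_antisymm
  · -- every minor is a multiple of q
    rw [minorsIdeal, Ideal.span_le]
    rintro _ ⟨⟨ρ, σ⟩, rfl⟩
    show ((Matrix.diagonal v).submatrix ρ σ).det ∈ Ideal.span {q}
    by_cases hσ : Function.Injective σ
    · rw [Ideal.mem_span_singleton, Matrix.det_apply']
      refine Finset.dvd_sum fun τ _ => ?_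
      by_cases hρτ : ∀ i, ρ (τ i) = σ i
      · have hprod : ∏ i, ((Matrix.diagonal v).submatrix ρ σ) (τ i) i = ∏ i, v (σ i) := by
          refine Finset.prod_congr rfl fun i _ => ?_
          simp [Matrix.submatrix_apply, hρτ i, Matrix.diagonal_apply_eq]
        rw [hprod]
        exact Dvd.dvd.mul_left (prod_dvd_prod_comp_injective d hddvd σ hσ) _
      · push_neg at hρτ
        obtain ⟨i, hi⟩ := hρτ
        have : ∏ i, ((Matrix.diagonal v).submatrix ρ σ) (τ i) i = 0 :=
          Finset.prod_eq_zero (Finset.mem_univ i)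
            (by simp [Matrix.submatrix_apply, Matrix.diagonal_apply_ne _ hi])
        rw [this, mul_zero]
        exact dvd_zero q
    · -- two equal columns
      rw [Function.not_injective_iff] at hσ
      obtain ⟨i, j, hij, hne⟩ := hσ
      have : ((Matrix.diagonal v).submatrix ρ σ).det = 0 :=
        Matrix.det_zero_of_column_eq hne fun l => by
          simp [Matrix.submatrix_apply, hij]
      rw [this]
      exact Ideal.zero_mem _
  · -- q is itself a minor
    rw [Ideal.span_le, Set.singleton_subset_iff]
    set ρ : Fin k → Fin n := Fin.castLE hk with hρ
    have hsub : (Matrix.diagonal v).submatrix ρ ρ = Matrix.diagonal (v ∘ ρ) := by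
      ext i j
      by_cases h : i = j
      · subst h; simp [Matrix.submatrix_apply]
      · have : ρ i ≠ ρ j := fun hc => h ((Fin.castLE_injective hk) hc)
        simp [Matrix.submatrix_apply, Matrix.diagonal_apply_ne _ this,
          Matrix.diagonal_apply_ne _ h]
    have : q = ((Matrix.diagonal v).submatrix ρ ρ).det := by
      rw [hsub, Matrix.det_diagonal, hq,
        ← Fin.prod_univ_eq_prod_range (fun j => if j < r then d j else 0)]
      rfl
    rw [this]
    exact minor_mem_minorsIdeal k _ ρ ρ


/-- Uniqueness of the Smith normal form over a domain: if two diagonal matrices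
`diag(d_1,…,d_r,0,…,0)` and `diag(d'_1,…,d'_s,0,…,0)` with divisibility chains are
equivalent (via matrices with unit determinant), then `r = s` and corresponding
diagonal coefficients generate the same principal ideals. -/
theorem smith_normal_form_unique {A : Type*} [CommRing A] [IsDomain A] {n : ℕ}
    (r s : ℕ) (hr : r ≤ n) (hs : s ≤ n) (d e : ℕ → A)
    (hd0 : ∀ i < r, d i ≠ 0) (he0 : ∀ i < s, e i ≠ 0)
    (hddvd : ∀ i, i + 1 < r → d i ∣ d (i + 1))
    (hedvd : ∀ i, i + 1 < s → e i ∣ e (i + 1))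
    (P Q : Matrix (Fin n) (Fin n) A) (hP : IsUnit P.det) (hQ : IsUnit Q.det)
    (hPQ : Matrix.diagonal (fun i : Fin n => if (i : ℕ) < r then d i else 0) =
      P * Matrix.diagonal (fun i : Fin n => if (i : ℕ) < s then e i else 0) * Q) :
    r = s ∧ ∀ i < r, Ideal.span {d i} = Ideal.span {e i} := by
  classical
  set D : Matrix (Fin n) (Fin n) A :=
    Matrix.diagonal (fun i : Fin n => if (i : ℕ) < r then d i else 0) with hD
  set D' : Matrix (Fin n) (Fin n) A :=
    Matrix.diagonal (fun i : Fin n => if (i : ℕ) < s then e i else 0) with hD'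
  -- the minors ideals of D and D' agree
  have hminors : ∀ k, minorsIdeal k D = minorsIdeal k D' := by
    intro k
    apply le_antisymm
    · rw [hPQ]
      exact ((minorsIdeal_mul_le_left k _ Q).trans (minorsIdeal_mul_le_right k P D'))
    · have hD'eq : D' = P⁻¹ * D * Q⁻¹ := by
        rw [hPQ, Matrix.mul_assoc P, ← Matrix.mul_assoc P⁻¹,
          Matrix.nonsing_inv_mul _ hP, Matrix.one_mul, Matrix.mul_assoc,
          Matrix.mul_nonsing_inv _ hQ, Matrix.mul_one]
      rw [hD'eq]
      exact ((minorsIdeal_mul_le_left k _ Q⁻¹).trans (minorsIdeal_mul_le_right k P⁻¹ D))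
  have hspan : ∀ k, k ≤ n →
      Ideal.span {∏ j ∈ Finset.range k, if j < r then d j else 0} =
        Ideal.span {∏ j ∈ Finset.range k, if j < s then e j else 0} := by
    intro k hk
    rw [← minorsIdeal_diagonal hk d hddvd, ← minorsIdeal_diagonal hk e hedvd]
    exact hminors k
  -- products of the first k entries
  have hprod_d : ∀ k, k ≤ r →
      (∏ j ∈ Finset.range k, if j < r then d j else 0) = ∏ j ∈ Finset.range k, d j :=
    fun k hk => Finset.prod_congr rfl fun j hj =>
      if_pos (lt_of_lt_of_le (Finset.mem_range.mp hj) hk)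
  have hprod_e : ∀ k, k ≤ s →
      (∏ j ∈ Finset.range k, if j < s then e j else 0) = ∏ j ∈ Finset.range k, e j :=
    fun k hk => Finset.prod_congr rfl fun j hj =>
      if_pos (lt_of_lt_of_le (Finset.mem_range.mp hj) hk)
  have hdne : ∀ k, k ≤ r → (∏ j ∈ Finset.range k, d j) ≠ 0 := fun k hk =>
    Finset.prod_ne_zero_iff.mpr fun j hj =>
      hd0 j (lt_of_lt_of_le (Finset.mem_range.mp hj) hk)
  have hene : ∀ k, k ≤ s → (∏ j ∈ Finset.range k, e j) ≠ 0 := fun k hk =>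
    Finset.prod_ne_zero_iff.mpr fun j hj =>
      he0 j (lt_of_lt_of_le (Finset.mem_range.mp hj) hk)
  have hrs : r = s := by
    by_contra hne
    rcases Nat.lt_or_ge r s with h | h
    · -- r < s : left product is zero, right isn't
      have h0 : (∏ j ∈ Finset.range s, if j < r then d j else 0) = 0 :=
        Finset.prod_eq_zero (Finset.mem_range.mpr h) (if_neg (lt_irrefl r))
      have := hspan s hs
      rw [h0, hprod_e s le_rfl] at this
      have h2 : Ideal.span ({(0 : A)} : Set A) = ⊥ := by simp
      rw [h2] at this
      exact hene s le_rfl (Ideal.span_singleton_eq_bot.mp this.symm)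
    · have h' : s < r := lt_of_le_of_ne h (Ne.symm hne)
      have h0 : (∏ j ∈ Finset.range r, if j < s then e j else 0) = 0 :=
        Finset.prod_eq_zero (Finset.mem_range.mpr h') (if_neg (lt_irrefl s))
      have := hspan r hr
      rw [h0, hprod_d r le_rfl] at this
      have h2 : Ideal.span ({(0 : A)} : Set A) = ⊥ := by simp
      rw [h2] at this
      exact hdne r le_rfl (Ideal.span_singleton_eq_bot.mp this)
  subst hrs
  refine ⟨rfl, fun i hi => ?_⟩
  -- associated products, cancel
  have hassoc : ∀ k, k ≤ r →
      Associated (∏ j ∈ Finset.range k, d j) (∏ j ∈ Finset.range k, e j) := by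
    intro k hk
    have := hspan k (hk.trans hr)
    rw [hprod_d k hk, hprod_e k hk] at this
    exact Ideal.span_singleton_eq_span_singleton.mp this
  have h1 : Associated ((∏ j ∈ Finset.range i, d j) * d i)
      ((∏ j ∈ Finset.range i, e j) * e i) := by
    rw [← Finset.prod_range_succ, ← Finset.prod_range_succ]
    exact hassoc (i + 1) hi
  have h2 : Associated (d i) (e i) :=
    h1.of_mul_left (hassoc i hi.le) (hdne i hi.le)
  exact Ideal.span_singleton_eq_span_singleton.mpr h2
end

section
/- Let k be a formally real field and let p(x) be a monic irreducible polynomial in k[x] such that the ideal (p) is not real (i.e., k[x]/(p) is not formally real, meaning -1 is a sum of squares in k[x]/(p)). Then for every ring homomorphism φ from k[x] to a real closed field R, and every evaluation, φ(p) takes only strictly positive values; equivalently, p is strictly positive at every point of the real spectrum of k[x]. -/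
set_option maxHeartbeats 1000000

open Polynomial

/-- A linearly ordered field is real closed if every nonnegative element is a square
and every polynomial of odd degree has a root. -/
def IsRealClosedField (R : Type*) [Field R] [LinearOrder R] [IsStrictOrderedRing R] : Prop :=
  (∀ x : R, 0 ≤ x → ∃ y : R, y ^ 2 = x) ∧
    ∀ f : Polynomial R, Odd f.natDegree → ∃ x : R, f.eval x = 0

section Aux

variable {R : Type*} [Field R] [LinearOrder R] [IsStrictOrderedRing R]

private lemma lead_add_pos {a b : R[X]} (ha : 0 < a.leadingCoeff) (hb : 0 < b.leadingCoeff) :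
    0 < (a + b).leadingCoeff := by
  rcases lt_trichotomy a.degree b.degree with h | h | h
  · rwa [Polynomial.leadingCoeff_add_of_degree_lt h]
  · rw [Polynomial.leadingCoeff_add_of_degree_eq h (by positivity)]
    exact add_pos ha hb
  · rwa [Polynomial.leadingCoeff_add_of_degree_lt' h]

private lemma one_add_sum_sq_lead_pos (s : Multiset R[X]) :
    0 < (1 + (s.map (· ^ 2)).sum).leadingCoeff := by
  induction s using Multiset.induction with
  | empty => simp
  | cons a s ih =>
    rcases eq_or_ne a 0 with rfl | ha
    · simpa using ih
    · have h1 : (1 + ((a ::ₘ s).map (· ^ 2)).sum) = (1 + (s.map (· ^ 2)).sum) + a ^ 2 := by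
        simp [Multiset.map_cons, Multiset.sum_cons]; ring
      rw [h1]
      refine lead_add_pos ih ?_
      rw [Polynomial.leadingCoeff_pow]
      have : a.leadingCoeff ≠ 0 := Polynomial.leadingCoeff_ne_zero.mpr ha
      positivity

end Aux

section Aux2

variable {A : Type*} [Semiring A]

private lemma natDegree_multiset_sum_le (s : Multiset A[X]) (B : ℕ)
    (h : ∀ x ∈ s, Polynomial.natDegree x ≤ B) : s.sum.natDegree ≤ B := by
  induction s using Multiset.induction with
  | empty => simp
  | cons a s ih =>
    rw [Multiset.sum_cons]
    exact (Polynomial.natDegree_add_le _ _).trans (max_le (h a (Multiset.mem_cons_self a s))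
      (ih fun x hx => h x (Multiset.mem_cons_of_mem hx)))

end Aux2

section Key

variable {k : Type*} [Field k] {R : Type*} [Field R] [LinearOrder R] [IsStrictOrderedRing R]

private lemma dvd_sub_sq_mod (p : k[X]) (hm : p.Monic) (s : Multiset k[X]) :
    p ∣ (s.map (· ^ 2)).sum - (s.map (fun a => (a %ₘ p) ^ 2)).sum := by
  induction s using Multiset.induction with
  | empty => simp
  | cons a s ih =>
    have key : p ∣ a ^ 2 - (a %ₘ p) ^ 2 := by
      have h1 : p * (a /ₘ p) = a - a %ₘ p := by
        rw [eq_sub_iff_add_eq, add_comm]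
        exact Polynomial.modByMonic_add_div a p
      have h2 : a ^ 2 - (a %ₘ p) ^ 2 = (a - a %ₘ p) * (a + a %ₘ p) := by ring
      rw [h2, ← h1]
      exact dvd_mul_of_dvd_left (dvd_mul_right p _) _
    have h3 : ((a ::ₘ s).map (· ^ 2)).sum - ((a ::ₘ s).map (fun a => (a %ₘ p) ^ 2)).sum
        = (a ^ 2 - (a %ₘ p) ^ 2) + ((s.map (· ^ 2)).sum - (s.map (fun a => (a %ₘ p) ^ 2)).sum) := by
      simp [Multiset.map_cons, Multiset.sum_cons]; ring
    rw [h3]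
    exact dvd_add key ih

private lemma key_lemma (φ : Polynomial k →+* R) :
    ∀ d : ℕ, ∀ p : k[X], p.natDegree ≤ d → p.Monic → Irreducible p →
      (∃ s : Multiset k[X], p ∣ 1 + (s.map (· ^ 2)).sum) → 0 < φ p := by
  have φ₀inj : Function.Injective (φ.comp (Polynomial.C : k →+* k[X])) :=
    (φ.comp (Polynomial.C : k →+* k[X])).injective
  intro d
  induction d using Nat.strong_induction_on with
  | _ d IH =>
  intro p hpd hm hirr ⟨s, hs⟩
  set φ₀ : k →+* R := φ.comp (Polynomial.C : k →+* k[X]) with hφ₀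
  set t : Multiset k[X] := s.map (· %ₘ p) with ht
  set g : k[X] := 1 + (t.map (· ^ 2)).sum with hg
  have d₀pos : 0 < p.natDegree := hirr.natDegree_pos
  -- p divides g
  have hpg : p ∣ g := by
    have h1 : p ∣ (s.map (· ^ 2)).sum - (t.map (· ^ 2)).sum := by
      rw [ht, Multiset.map_map]
      exact dvd_sub_sq_mod p hm s
    have : g = (1 + (s.map (· ^ 2)).sum) - ((s.map (· ^ 2)).sum - (t.map (· ^ 2)).sum) := by
      rw [hg]; ring
    rw [this]
    exact dvd_sub hs h1
  -- φ g ≥ 1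
  have hφg : 0 < φ g := by
    have h1 : φ g = 1 + (t.map (fun a => (φ a) ^ 2)).sum := by
      rw [hg, map_add, map_one, map_multiset_sum, ht, Multiset.map_map, Multiset.map_map]
      simp [Function.comp_def]
    have h2 : 0 ≤ (t.map (fun a => (φ a) ^ 2)).sum := by
      apply Multiset.sum_nonneg
      intro x hx
      obtain ⟨a, _, rfl⟩ := Multiset.mem_map.mp hx
      positivity
    rw [h1]; linarith
  have hgne : g ≠ 0 := fun h => by simp [h] at hφg
  obtain ⟨q, hq⟩ := hpg
  have hqne : q ≠ 0 := fun h => hgne (by simp [hq, h])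
  -- degree bound on g
  have hgdeg : g.natDegree ≤ 2 * p.natDegree - 2 := by
    rw [hg]
    refine (Polynomial.natDegree_add_le _ _).trans (max_le (by simp) ?_)
    refine natDegree_multiset_sum_le _ _ ?_
    intro x hx
    obtain ⟨a, ha, rfl⟩ := Multiset.mem_map.mp hx
    obtain ⟨b, _, rfl⟩ := Multiset.mem_map.mp ha
    have hb : (b %ₘ p).natDegree ≤ p.natDegree - 1 := by
      rcases eq_or_ne (b %ₘ p) 0 with h | h
      · simp [h]
      · have := Polynomial.natDegree_lt_natDegree h
          (Polynomial.degree_modByMonic_lt b hm)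
        omega
    rw [Polynomial.natDegree_pow]
    omega
  have hdeg_eq : g.natDegree = p.natDegree + q.natDegree := by
    rw [hq, Polynomial.natDegree_mul hm.ne_zero hqne]
  have hqdeg : q.natDegree + 2 ≤ p.natDegree := by omega
  -- leading coefficient of g is positive under φ₀
  have hlead : 0 < φ₀ g.leadingCoeff := by
    have h1 : g.map φ₀ = 1 + ((s.map (fun x => (x %ₘ p).map φ₀)).map (· ^ 2)).sum := by
      rw [hg, ht, Polynomial.map_add, Polynomial.map_one,
        ← Polynomial.coe_mapRingHom, map_multiset_sum, Multiset.map_map, Multiset.map_map,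
        Multiset.map_map]
      simp [Function.comp_def]
    have h2 := one_add_sum_sq_lead_pos (s.map (fun x => (x %ₘ p).map φ₀))
    rw [← h1, Polynomial.leadingCoeff_map] at h2
    exact h2
  have hleadq : q.leadingCoeff = g.leadingCoeff := by
    rw [hq, Polynomial.leadingCoeff_mul, hm.leadingCoeff, one_mul]
  -- inner claim: factors of g of degree < p's degree
  have inner : ∀ e : ℕ, ∀ r : k[X], r ≠ 0 → r ∣ g → r.natDegree ≤ e →
      r.natDegree + 1 ≤ p.natDegree → 0 < φ r * φ₀ r.leadingCoeff := by
    intro e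
    induction e using Nat.strong_induction_on with
    | _ e IHe =>
    intro r hrne hrg hre hrd
    rcases Nat.eq_zero_or_pos r.natDegree with h0 | hpos
    · obtain ⟨c, rfl⟩ := Polynomial.natDegree_eq_zero.mp h0
      have hc : c ≠ 0 := fun h => hrne (by simp [h])
      have : φ (Polynomial.C c) = φ₀ c := rfl
      rw [this, Polynomial.leadingCoeff_C]
      have : φ₀ c ≠ 0 := fun h => hc (φ₀inj (by simpa using h))
      exact mul_self_pos.mpr this
    · -- extract a monic irreducible factor
      have hru : ¬ IsUnit r := by
        intro h
        have := Polynomial.natDegree_eq_zero_of_isUnit h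
        omega
      obtain ⟨w, hwirr, hwr⟩ := WfDvdMonoid.exists_irreducible_factor hru hrne
      have hwne : w ≠ 0 := hwirr.ne_zero
      set w2 : k[X] := w * Polynomial.C w.leadingCoeff⁻¹ with hw2
      have hw2m : w2.Monic := Polynomial.monic_mul_leadingCoeff_inv hwne
      have hassoc : Associated w w2 := by
        apply associated_mul_unit_right
        exact Polynomial.isUnit_C.mpr (isUnit_iff_ne_zero.mpr
          (inv_ne_zero (Polynomial.leadingCoeff_ne_zero.mpr hwne)))
      have hw2irr : Irreducible w2 := hassoc.irreducible hwirr
      have hw2r : w2 ∣ r := hassoc.symm.dvd.trans hwr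
      obtain ⟨r₂, hr₂⟩ := hw2r
      have hr₂ne : r₂ ≠ 0 := fun h => hrne (by simp [hr₂, h])
      have hw2pos : 0 < w2.natDegree := hw2irr.natDegree_pos
      have hdeg2 : r.natDegree = w2.natDegree + r₂.natDegree := by
        rw [hr₂, Polynomial.natDegree_mul hw2m.ne_zero hr₂ne]
      -- φ w2 > 0 by outer IH
      have hw2pos' : 0 < φ w2 := by
        refine IH w2.natDegree (by omega) w2 le_rfl hw2m hw2irr ⟨t, ?_⟩
        exact dvd_trans ⟨r₂, hr₂⟩ hrg
      -- inner IH on r₂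
      have hr₂pos : 0 < φ r₂ * φ₀ r₂.leadingCoeff := by
        refine IHe r₂.natDegree (by omega) r₂ hr₂ne (dvd_trans ⟨w2, by rw [hr₂]; ring⟩ hrg)
          le_rfl (by omega)
      rw [hr₂, map_mul, Polynomial.leadingCoeff_mul, hw2m.leadingCoeff, one_mul]
      calc (0:R) < φ w2 * (φ r₂ * φ₀ r₂.leadingCoeff) := mul_pos hw2pos' hr₂pos
        _ = φ w2 * φ r₂ * φ₀ r₂.leadingCoeff := by ring
  -- conclude
  have hqpos : 0 < φ q := by
    have h1 : 0 < φ q * φ₀ q.leadingCoeff :=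
      inner q.natDegree q hqne ⟨p, by rw [hq]; ring⟩ le_rfl (by omega)
    rw [hleadq] at h1
    nlinarith
  have : φ p * φ q = φ g := by rw [hq, map_mul]
  nlinarith

end Key

/-- Let `k` be a formally real field and `p` a monic irreducible polynomial in `k[x]`
generating a non-real ideal (i.e. `-1` is a sum of squares in `k[x]/(p)`). Then `p` is
strictly positive at every point of the real spectrum of `k[x]`: for every ring
homomorphism `φ` from `k[x]` into a real closed field `R`, `φ(p) > 0`. -/
theorem nonreal_irreducible_pos {k : Type*} [Field k]
    (hk : ¬ IsSumSq (-1 : k))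
    (p : Polynomial k) (hmonic : p.Monic) (hirr : Irreducible p)
    (hnonreal : IsSumSq (-1 : Polynomial k ⧸ Ideal.span {p})) :
    ∀ (R : Type) [Field R] [LinearOrder R] [IsStrictOrderedRing R], IsRealClosedField R →
      ∀ φ : Polynomial k →+* R, 0 < φ p := by
  intro R _ _ _ _ φ
  -- lift the sum of squares to a multiset of polynomials
  have lift : ∀ y : Polynomial k ⧸ Ideal.span {p}, IsSumSq y →
      ∃ s : Multiset (Polynomial k),
        Ideal.Quotient.mk (Ideal.span {p}) ((s.map (· ^ 2)).sum) = y := by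
    intro y hy
    induction hy with
    | zero => exact ⟨0, by simp⟩
    | @sq_add a S hS ih =>
      obtain ⟨s, hs⟩ := ih
      obtain ⟨a₀, ha₀⟩ := Ideal.Quotient.mk_surjective a
      refine ⟨a₀ ::ₘ s, ?_⟩
      simp only [Multiset.map_cons, Multiset.sum_cons, map_add, hs, map_pow, ha₀]
      ring
  obtain ⟨s, hs⟩ := lift _ hnonreal
  have hdvd : p ∣ 1 + (s.map (· ^ 2)).sum := by
    rw [← Ideal.mem_span_singleton]
    have : Ideal.Quotient.mk (Ideal.span {p}) (1 + (s.map (· ^ 2)).sum) = 0 := by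
      rw [map_add, hs, map_one]; ring
    exact (Ideal.Quotient.eq_zero_iff_mem).mp this
  exact key_lemma φ p.natDegree p le_rfl hmonic hirr ⟨s, hdvd⟩
end

section
/- In the ring A = ℝ[x,y]/(y² − x(x²−1)), with q = x − 1/2, the identity q² = 1/4 + (x² − x) holds, and the element e = x² − x satisfies: for every ring homomorphism φ : A → ℝ, φ(e) ≥ 0. -/
open Polynomial

lemma half_sq_aux : ((X : ℝ[X]) - C (1/2:ℝ))^2 = C (1/4:ℝ) + (X^2 - X) := by
  rw [sub_sq, ← C_pow]
  norm_num
  ring_nf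
  rw [mul_assoc, show ((2:ℝ[X]) = C 2) from (map_ofNat C 2).symm, ← C_mul]
  norm_num

/-- In `A = ℝ[x,y]/(y² - x(x²-1))`, with `q = x - 1/2`, the identity
`q² = 1/4 + (x² - x)` holds, and `e = x² - x` is nonnegative under every ring
homomorphism `A → ℝ`. -/
theorem cubic_counterexample_data :
    let I : Ideal (Polynomial (Polynomial ℝ)) :=
      Ideal.span {(X : Polynomial (Polynomial ℝ)) ^ 2 -
        C ((X * (X ^ 2 - 1)) : Polynomial ℝ)}
    let xA := Ideal.Quotient.mk I (C (X : Polynomial ℝ))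
    let q := xA - Ideal.Quotient.mk I (C (C (1/2 : ℝ)))
    q ^ 2 = Ideal.Quotient.mk I (C (C (1/4 : ℝ))) + (xA ^ 2 - xA) ∧
      ∀ φ : (Polynomial (Polynomial ℝ) ⧸ I) →+* ℝ, 0 ≤ φ (xA ^ 2 - xA) := by
  intro I xA q
  constructor
  · show (Ideal.Quotient.mk I (C X) - Ideal.Quotient.mk I (C (C (1/2 : ℝ))))^2 =
      Ideal.Quotient.mk I (C (C (1/4 : ℝ))) +
        ((Ideal.Quotient.mk I (C X))^2 - Ideal.Quotient.mk I (C X))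
    rw [← map_sub, ← map_pow, ← C_sub, ← C_pow, half_sq_aux]
    rw [C_add, C_sub, C_pow, map_add, map_sub, map_pow]
  · intro φ
    have hrel : (Ideal.Quotient.mk I) ((X : Polynomial (Polynomial ℝ)) ^ 2 -
        C ((X * (X ^ 2 - 1)) : Polynomial ℝ)) = 0 :=
      Ideal.Quotient.eq_zero_iff_mem.mpr (Ideal.subset_span rfl)
    set a := φ xA with ha
    have key : (φ (Ideal.Quotient.mk I X))^2 = a * (a^2 - 1) := by
      have h2 : (Ideal.Quotient.mk I) ((X : Polynomial (Polynomial ℝ)) ^ 2) =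
          (Ideal.Quotient.mk I) (C ((X * (X ^ 2 - 1)) : Polynomial ℝ)) := by
        rw [← sub_eq_zero, ← map_sub]; exact hrel
      have h3 := congrArg φ h2
      rw [C_mul, C_sub, C_pow, C_1] at h3
      simpa [map_pow, map_mul, map_sub, map_one, ha, xA] using h3
    have h0 : (0:ℝ) ≤ a * (a^2 - 1) := key ▸ sq_nonneg _
    have : φ (xA^2 - xA) = a^2 - a := by rw [map_sub, map_pow, ha]
    rw [this]
    nlinarith [sq_nonneg a, sq_nonneg (a+1), sq_nonneg (a-1), sq_nonneg (a*(a-1)), sq_nonneg (a^2-1)]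
end

section
/- Let A be a unique factorization domain, and suppose a, b ∈ A and p ∈ A is irreducible with (p) a real prime ideal such that there exists an ordering α of A with support (p) admitting a generization β with support (0). If a − b² is nonnegative with respect to every ordering of A (with every support), then ν_p(a) ≤ 2·ν_p(b), where ν_p denotes the p-adic valuation. -/
/-- A point of the real spectrum of `A`: a ring homomorphism from `A` into a real
closed field.  Its support is the kernel of the homomorphism. -/
structure RealSpectrumPoint (A : Type*) [CommRing A] where
  carrier : Type
  [field : Field carrier]
  [linearOrder : LinearOrder carrier]
  [isStrictOrderedRing : IsStrictOrderedRing carrier]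
  realClosed : IsRealClosedField carrier
  hom : A →+* carrier

attribute [instance] RealSpectrumPoint.field
attribute [instance] RealSpectrumPoint.linearOrder
attribute [instance] RealSpectrumPoint.isStrictOrderedRing

/-- Let `A` be a formally real UFD, `p` an irreducible with `(p)` a real prime ideal
such that some ordering `α` with support `(p)` admits a generization `β` with support
`(0)`.  If `a - b²` is nonnegative at every point of the real spectrum of `A`, then
`ν_p(a) ≤ 2·ν_p(b)`, i.e. every power of `p` dividing `a` divides `b²`. -/
theorem valuation_of_psd {A : Type*} [CommRing A] [IsDomain A]
    [UniqueFactorizationMonoid A]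
    (hA : ¬ IsSumSq (-1 : A))
    (a b p : A) (ha : a ≠ 0) (hb : b ≠ 0)
    (hp : Irreducible p) (hprime : (Ideal.span {p}).IsPrime)
    (hpreal : ¬ IsSumSq (-1 : A ⧸ Ideal.span {p}))
    (hgen : ∃ (α β : RealSpectrumPoint A),
        RingHom.ker α.hom = Ideal.span {p} ∧ RingHom.ker β.hom = ⊥ ∧
        ∀ x : A, 0 ≤ β.hom x → 0 ≤ α.hom x)
    (hpsd : ∀ γ : RealSpectrumPoint A, 0 ≤ γ.hom (a - b ^ 2)) :
    ∀ k : ℕ, p ^ k ∣ a → p ^ k ∣ b ^ 2 := by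
  obtain ⟨α, β, hkα, hkβ, hαβ⟩ := hgen
  have hpp : Prime p := UniqueFactorizationMonoid.irreducible_iff_prime.mp hp
  obtain ⟨b', hbeq, hb'⟩ :=
    (FiniteMultiplicity.of_prime_left hpp hb).exists_eq_pow_mul_and_not_dvd
  set t := multiplicity p b with ht
  intro k hk
  rcases le_or_gt k (2 * t) with hle | hlt
  · refine dvd_trans (pow_dvd_pow p hle) ⟨b' ^ 2, ?_⟩
    rw [hbeq]; ring
  · exfalso
    obtain ⟨a'', ha''⟩ : p ^ (2 * t + 1) ∣ a := dvd_trans (pow_dvd_pow p hlt) hk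
    have hdiff : a - b ^ 2 = p ^ (2 * t) * (p * a'' - b' ^ 2) := by
      rw [ha'', hbeq]; ring
    have hβp : β.hom p ≠ 0 := by
      intro h
      exact hpp.ne_zero (Ideal.mem_bot.mp (hkβ ▸ RingHom.mem_ker.mpr h))
    have h1 : 0 ≤ β.hom (p ^ (2 * t)) * β.hom (p * a'' - b' ^ 2) := by
      have := hpsd β
      rwa [hdiff, map_mul] at this
    have h2 : 0 < β.hom (p ^ (2 * t)) := by
      rw [map_pow]
      have : β.hom p ^ (2 * t) = (β.hom p ^ t) ^ 2 := by ring
      rw [this]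
      exact pow_two_pos_of_ne_zero (pow_ne_zero t hβp)
    have hu : 0 ≤ β.hom (p * a'' - b' ^ 2) := nonneg_of_mul_nonneg_right h1 h2
    have hαu : 0 ≤ α.hom (p * a'' - b' ^ 2) := hαβ _ hu
    have hαp : α.hom p = 0 := by
      have : p ∈ RingHom.ker α.hom := hkα ▸ Ideal.mem_span_singleton_self p
      exact RingHom.mem_ker.mp this
    have hsq : α.hom b' ^ 2 ≤ 0 := by
      have := hαu
      rw [map_sub, map_mul, hαp, zero_mul, map_pow, zero_sub] at this
      linarith
    have hb0 : α.hom b' = 0 := by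
      have := le_antisymm hsq (sq_nonneg _)
      exact pow_eq_zero_iff (two_ne_zero) |>.mp this
    exact hb' (Ideal.mem_span_singleton.mp
      (hkα ▸ RingHom.mem_ker.mpr hb0))
end
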